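/- Menas's theorem (other direction): Let X be a set and κ a regular uncountable cardinal with κ ≤ |X|. For every club C ⊆ [X]^{<κ} there exists a function F : [X]^{<ω} → [X]^{<κ} such that cl_F := { a ∈ [X]^{<κ} : ∀ x ∈ [a]^{<ω}, F(x) ⊆ a } is a subset of C. -/
import Mathlib


open Cardinal

universe u

/-- `[X]^{<κ}`: the subsets of `X` of cardinality `< κ`. -/
def SmallSets {α : Type u} (κ : Cardinal.{u}) (X : Set α) : Set (Set α) :=
  {a | a ⊆ X ∧ #a < κ}

/-- `C` is club in `[X]^{<κ}`: it consists of `<κ`-sized subsets of `X`, is cofinal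
under `⊆`, and is closed under unions of `⊆`-increasing chains of length `< κ`. -/
def IsClubIn {α : Type u} (κ : Cardinal.{u}) (X : Set α) (C : Set (Set α)) : Prop :=
  C ⊆ SmallSets κ X ∧
  (∀ a ∈ SmallSets κ X, ∃ b ∈ C, a ⊆ b) ∧
  (∀ (ι : Type u) [LinearOrder ι], Nonempty ι → #ι < κ →
    ∀ f : ι → Set α, Monotone f → (∀ i, f i ∈ C) → (⋃ i, f i) ∈ C)

/-- `S` is stationary in `[X]^{<κ}`: it meets every club subset of `[X]^{<κ}`. -/
def IsStationaryIn {α : Type u} (κ : Cardinal.{u}) (X : Set α) (S : Set (Set α)) : Prop :=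
  S ⊆ SmallSets κ X ∧ ∀ C, IsClubIn κ X C → (S ∩ C).Nonempty


theorem myDirected {α : Type u} {κ : Cardinal.{u}} (hreg : κ.IsRegular) (hunc : ℵ₀ < κ)
    {C : Set (Set α)}
    (hchain : ∀ (ι : Type u) [LinearOrder ι], Nonempty ι → #ι < κ →
      ∀ f : ι → Set α, Monotone f → (∀ i, f i ∈ C) → (⋃ i, f i) ∈ C)
    (μ : Cardinal.{u}) :
    μ < κ → ∀ (ι : Type u), Nonempty ι → #ι ≤ μ →
      ∀ f : ι → Set α, Directed (· ≤ ·) f → (∀ i, f i ∈ C) → (⋃ i, f i) ∈ C := by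
  induction μ using WellFounded.induction Cardinal.lt_wf with
  | _ μ IH =>
  intro hμκ ι hne hιμ f hdir hfC
  -- choice of upper bounds
  choose u hu1 hu2 using hdir
  rcases lt_or_ge (#ι) ℵ₀ with hfin | hinf
  · -- finite case
    have : Finite ι := lt_aleph0_iff_finite.mp hfin
    obtain ⟨z, hz⟩ := Directed.finite_le (f := f) (fun i j => ⟨u i j, hu1 i j, hu2 i j⟩) id
    have he : ⋃ i, f i = f z :=
      le_antisymm (Set.iUnion_subset fun i => hz i) (Set.subset_iUnion f z)
    rw [he]; exact hfC z
  rcases eq_or_lt_of_le hinf with heq | hlt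
  · -- countable case
    obtain ⟨d⟩ : Nonempty (Denumerable ι) := denumerable_iff.mpr heq.symm
    have e : ℕ ≃ ι := (@Denumerable.eqv ι d).symm
    set v : ℕ → ι := fun n => Nat.rec (e 0) (fun n vn => u vn (e (n + 1))) n with hv
    have hstep : ∀ n, f (v n) ⊆ f (v (n + 1)) := fun n => hu1 _ _
    have hmono : Monotone (fun n => f (v n)) := monotone_nat_of_le_succ hstep
    have hcov : ∀ n : ℕ, f (e n) ⊆ f (v n) := by
      intro n
      cases n with
      | zero => exact le_rfl
      | succ n => exact hu2 _ _
    have hUeq : (⋃ n : ULift.{u} ℕ, f (v n.down)) = ⋃ i, f i := by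
      apply le_antisymm
      · exact Set.iUnion_subset fun n => Set.subset_iUnion f (v n.down)
      · refine Set.iUnion_subset fun i => ?_
        have : i = e (e.symm i) := (e.apply_symm_apply i).symm
        rw [this]
        exact (hcov (e.symm i)).trans (Set.subset_iUnion (fun n : ULift.{u} ℕ => f (v n.down)) ⟨e.symm i⟩)
    rw [← hUeq]
    refine hchain (ULift.{u} ℕ) ⟨⟨0⟩⟩ ?_ _ ?_ fun n => hfC _
    · rw [mk_uLift, mk_nat, lift_aleph0]; exact hunc
    · intro n m hnm
      exact hmono (show n.down ≤ m.down by exact_mod_cast hnm)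
  · -- uncountable case
    obtain ⟨r, wo, hr⟩ := ord_eq ι
    letI : DecidableRel r := fun a b => Classical.propDecidable (r a b)
    letI : LinearOrder ι := linearOrderOfSTO r
    have hle : ∀ j i : ι, j ≤ i ↔ j = i ∨ r j i := fun j i => Iff.rfl
    have hIiclt : ∀ i : ι, #(Set.Iic i) < #ι := by
      intro i
      have h1 : Set.Iic i = insert i {j | r j i} := by
        ext j
        simp only [Set.mem_Iic, Set.mem_insert_iff, Set.mem_setOf_eq, hle]
      have h2 : #({j | r j i} : Set ι) < #ι := by
        have := Ordinal.typein_lt_type r i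
        rw [← hr, Cardinal.lt_ord] at this
        rwa [show #({j | r j i} : Set ι) = (Ordinal.typein r i).card from
          (Ordinal.card_typein i).symm]
      rw [h1]
      exact mk_insert_le.trans_lt (add_lt_of_lt hinf h2 (one_lt_aleph0.trans_le hinf))
    set T : ι → ℕ → Set ι := fun i n =>
      Nat.rec (Set.Iic i) (fun _ Tn => Tn ∪ Set.image2 u Tn Tn) n with hTdef
    set E : ι → Set ι := fun i => ⋃ n : ULift.{u} ℕ, T i n.down with hEdef
    have hT0 : ∀ i : ι, i ∈ T i 0 := fun i => Set.mem_Iic.mpr le_rfl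
    have hTsucc : ∀ (i : ι) (n : ℕ), T i n ⊆ T i (n + 1) := fun i n => Set.subset_union_left
    have hTmono : ∀ i : ι, Monotone (T i) := fun i => monotone_nat_of_le_succ (hTsucc i)
    have hTmono' : ∀ {i i' : ι}, i ≤ i' → ∀ n, T i n ⊆ T i' n := by
      intro i i' h n
      induction n with
      | zero => exact Set.Iic_subset_Iic.mpr h
      | succ n ih => exact Set.union_subset_union ih (Set.image2_subset ih ih)
    have hEmem : ∀ i : ι, i ∈ E i := fun i => Set.mem_iUnion.mpr ⟨⟨0⟩, hT0 i⟩
    have hEmono : ∀ {i i' : ι}, i ≤ i' → E i ⊆ E i' := fun h =>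
      Set.iUnion_mono fun n => hTmono' h n.down
    have hEu : ∀ {i j k : ι}, j ∈ E i → k ∈ E i → u j k ∈ E i := by
      intro i j k hj hk
      obtain ⟨n, hn⟩ := Set.mem_iUnion.mp hj
      obtain ⟨m, hm⟩ := Set.mem_iUnion.mp hk
      refine Set.mem_iUnion.mpr ⟨⟨max n.down m.down + 1⟩, Set.mem_union_right _ ?_⟩
      exact Set.mem_image2_of_mem (hTmono i (le_max_left _ _) hn)
        (hTmono i (le_max_right _ _) hm)
    have hTcard : ∀ (i : ι) (n : ℕ), #(T i n) ≤ max (#(Set.Iic i)) ℵ₀ := by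
      intro i n
      have hν : ℵ₀ ≤ max (#(Set.Iic i)) ℵ₀ := le_max_right _ _
      induction n with
      | zero => exact le_max_left _ _
      | succ n ih =>
        refine (mk_union_le _ _).trans ?_
        have h2 : #(Set.image2 u (T i n) (T i n)) ≤
            max (#(Set.Iic i)) ℵ₀ * max (#(Set.Iic i)) ℵ₀ :=
          mk_image2_le.trans (mul_le_mul' ih ih)
        rw [mul_eq_self hν] at h2
        have := add_le_add ih h2
        rwa [add_eq_self hν] at this
    have hEcard : ∀ i : ι, #(E i) < #ι := by
      intro i
      have h1 : #(E i) ≤ #(ULift.{u} ℕ) * ⨆ n : ULift.{u} ℕ, #(T i n.down) :=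
        mk_iUnion_le _
      have h2 : (⨆ n : ULift.{u} ℕ, #(T i n.down)) ≤ max (#(Set.Iic i)) ℵ₀ :=
        ciSup_le' fun n => hTcard i n.down
      have h3 : #(ULift.{u} ℕ) = ℵ₀ := by rw [mk_uLift, mk_nat, lift_aleph0]
      have h4 : max (#(Set.Iic i)) ℵ₀ < #ι := max_lt (hIiclt i) hlt
      calc #(E i) ≤ ℵ₀ * max (#(Set.Iic i)) ℵ₀ := by
            rw [← h3]; exact h1.trans (mul_le_mul_right h2 _)
        _ < #ι := mul_lt_of_lt hinf hlt h4
    have hNE : ∀ i : ι, Nonempty (E i) := fun i => ⟨⟨i, hEmem i⟩⟩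
    set U : ι → Set α := fun i => ⋃ j : E i, f j with hUdef
    have hUC : ∀ i, U i ∈ C := by
      intro i
      exact IH (#(E i)) ((hEcard i).trans_le hιμ) ((hEcard i).trans_le (hιμ.trans hμκ.le))
        (↥(E i)) (hNE i) le_rfl (fun j => f j)
        (fun j k => ⟨⟨u j k, hEu j.2 k.2⟩, hu1 _ _, hu2 _ _⟩) (fun j => hfC _)
    have hUmono : Monotone U := by
      intro i i' h
      refine Set.iUnion_subset fun j => ?_
      exact Set.subset_iUnion_of_subset (⟨j.1, hEmono h j.2⟩ : ↥(E i')) le_rfl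
    have hfinal := hchain ι hne (hιμ.trans_lt hμκ) U hUmono hUC
    have heq2 : (⋃ i, U i) = ⋃ i, f i := by
      apply le_antisymm
      · exact Set.iUnion_subset fun i => Set.iUnion_subset fun j => Set.subset_iUnion f j.1
      · exact Set.iUnion_subset fun i =>
          (Set.subset_iUnion_of_subset (⟨i, hEmem i⟩ : ↥(E i)) le_rfl).trans
            (Set.subset_iUnion U i)
    rwa [heq2] at hfinal


lemma mySmall_iUnion {α : Type u} {κ : Cardinal.{u}} (hreg : κ.IsRegular) {X : Set α}
    {ι : Type u} (hι : #ι < κ) {f : ι → Set α} (hf : ∀ i, f i ∈ SmallSets κ X) :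
    (⋃ i, f i) ∈ SmallSets κ X :=
  ⟨Set.iUnion_subset fun i => (hf i).1,
    mk_iUnion_le_sum_mk.trans_lt (sum_lt_of_isRegular hreg hι fun i => (hf i).2)⟩

lemma mySmall_union {α : Type u} {κ : Cardinal.{u}} (hreg : κ.IsRegular) {X : Set α}
    {s t : Set α} (hs : s ∈ SmallSets κ X) (ht : t ∈ SmallSets κ X) :
    s ∪ t ∈ SmallSets κ X :=
  ⟨Set.union_subset hs.1 ht.1,
    (mk_union_le s t).trans_lt (add_lt_of_lt hreg.aleph0_le hs.2 ht.2)⟩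

section main
variable {α : Type u} (κ : Cardinal.{u}) (hreg : κ.IsRegular) (hunc : ℵ₀ < κ)
    (X : Set α) (C : Set (Set α))

theorem stmt7' (hreg : κ.IsRegular) (hunc : ℵ₀ < κ) (hC : C ⊆ SmallSets κ X ∧
      (∀ a ∈ SmallSets κ X, ∃ b ∈ C, a ⊆ b) ∧
      (∀ (ι : Type u) [LinearOrder ι], Nonempty ι → #ι < κ →
        ∀ f : ι → Set α, Monotone f → (∀ i, f i ∈ C) → (⋃ i, f i) ∈ C)) :
    ∃ F : Set α → Set α, (∀ s : Set α, s ⊆ X → s.Finite → F s ∈ SmallSets κ X) ∧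
      {a | a ∈ SmallSets κ X ∧ ∀ s ⊆ a, s.Finite → F s ⊆ a} ⊆ C := by
  classical
  obtain ⟨hsub, hcof, hchain⟩ := hC
  set pick : Set α → Set α :=
    fun A => if h : A ∈ SmallSets κ X then (hcof A h).choose else ∅ with hpickdef
  have hpickC : ∀ A ∈ SmallSets κ X, pick A ∈ C := by
    intro A hA
    simp only [hpickdef, dif_pos hA]
    exact (hcof A hA).choose_spec.1
  have hpicksub : ∀ A ∈ SmallSets κ X, A ⊆ pick A := by
    intro A hA
    simp only [hpickdef, dif_pos hA]
    exact (hcof A hA).choose_spec.2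
  set G : ℕ → Set α → Set α :=
    fun n => Nat.rec pick (fun _ Gn s => pick (Gn s ∪ ⋃ t ∈ {t : Set α | t ⊂ s}, Gn t)) n
    with hGdef
  have hfin_small : ∀ s : Set α, s ⊆ X → s.Finite → s ∈ SmallSets κ X :=
    fun s h1 h2 => ⟨h1, h2.lt_aleph0.trans hunc⟩
  -- G n s lands in C, and the recursion argument is small
  have hGC : ∀ n, ∀ s : Set α, s ⊆ X → s.Finite → G n s ∈ C := by
    intro n
    induction n with
    | zero => exact fun s h1 h2 => hpickC s (hfin_small s h1 h2)
    | succ n ih =>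
      intro s h1 h2
      exact hpickC _ (by
        refine mySmall_union hreg (hsub (ih s h1 h2)) ?_
        rw [Set.biUnion_eq_iUnion]
        refine mySmall_iUnion hreg ?_ fun t => hsub (ih t.1 (t.2.1.subset.trans h1) (h2.subset t.2.1.subset))
        have : Finite ↥{t : Set α | t ⊂ s} :=
          (h2.finite_subsets.subset fun t (ht : t ⊂ s) => ht.subset).to_subtype
        exact (lt_aleph0_of_finite _).trans hunc)
  have hGarg : ∀ n, ∀ s : Set α, s ⊆ X → s.Finite →
      (G n s ∪ ⋃ t ∈ {t : Set α | t ⊂ s}, G n t) ∈ SmallSets κ X := by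
    intro n s h1 h2
    refine mySmall_union hreg (hsub (hGC n s h1 h2)) ?_
    rw [Set.biUnion_eq_iUnion]
    refine mySmall_iUnion hreg ?_ fun t => hsub (hGC n t.1 (t.2.1.subset.trans h1) (h2.subset t.2.1.subset))
    have : Finite ↥{t : Set α | t ⊂ s} :=
      (h2.finite_subsets.subset fun t (ht : t ⊂ s) => ht.subset).to_subtype
    exact (lt_aleph0_of_finite _).trans hunc
  have hGsucc : ∀ n, ∀ s : Set α, s ⊆ X → s.Finite → G n s ⊆ G (n + 1) s := by
    intro n s h1 h2
    exact Set.subset_union_left.trans (hpicksub _ (hGarg n s h1 h2))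
  have hGmono : ∀ {n m : ℕ}, n ≤ m → ∀ s : Set α, s ⊆ X → s.Finite → G n s ⊆ G m s := by
    intro n m h s h1 h2
    induction m with
    | zero => rw [Nat.le_zero.mp h]
    | succ m ihm =>
      rcases Nat.le_succ_iff.mp h with h' | rfl
      · exact (ihm h').trans (hGsucc m s h1 h2)
      · exact le_rfl
  have hGself : ∀ n, ∀ s : Set α, s ⊆ X → s.Finite → s ⊆ G n s := by
    intro n s h1 h2
    exact (hpicksub s (hfin_small s h1 h2)).trans (hGmono (Nat.zero_le n) s h1 h2)
  have hGstep : ∀ n, ∀ s t : Set α, s ⊆ X → s.Finite → t ⊂ s → G n t ⊆ G (n + 1) s := by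
    intro n s t h1 h2 hts
    refine le_trans ?_ (hpicksub _ (hGarg n s h1 h2))
    exact le_trans (Set.subset_biUnion_of_mem (u := fun t => G n t)
      (show t ∈ {t : Set α | t ⊂ s} from hts)) Set.subset_union_right
  -- the function F
  set F : Set α → Set α := fun s => G s.ncard s with hFdef
  have hFC : ∀ s : Set α, s ⊆ X → s.Finite → F s ∈ C := fun s h1 h2 => hGC _ s h1 h2
  have hFself : ∀ s : Set α, s ⊆ X → s.Finite → s ⊆ F s := fun s h1 h2 => hGself _ s h1 h2
  have hFmono : ∀ s t : Set α, s ⊆ X → s.Finite → t ⊆ s → F t ⊆ F s := by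
    intro s t h1 h2 hts
    rcases eq_or_ne t s with rfl | hne
    · exact le_rfl
    have hss : t ⊂ s := ⟨hts, fun h => hne (le_antisymm hts h)⟩
    have hlt : t.ncard < s.ncard := Set.ncard_lt_ncard hss h2
    obtain ⟨m, hm⟩ : ∃ m, s.ncard = m + 1 :=
      ⟨s.ncard - 1, by omega⟩
    have ht1 : t ⊆ X := hts.trans h1
    have ht2 : t.Finite := h2.subset hts
    calc F t = G t.ncard t := rfl
      _ ⊆ G m t := hGmono (by omega) t ht1 ht2
      _ ⊆ G (m + 1) s := hGstep m s t h1 h2 hss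
      _ = F s := (show F s = G (m + 1) s from by rw [hFdef]; simp only; rw [hm]).symm
  refine ⟨F, fun s h1 h2 => hsub (hFC s h1 h2), ?_⟩
  rintro a ⟨ha, hcl⟩
  -- index type: finite subsets of a
  set ι : Type u := {s : Set α // s ⊆ a ∧ s.Finite} with hιdef
  have hne : Nonempty ι := ⟨⟨∅, Set.empty_subset a, Set.finite_empty⟩⟩
  have hκι : #ι < κ := by
    let e : ι → Finset ↥a := fun s =>
      (s.2.2.preimage ((Subtype.val_injective (p := (· ∈ a))).injOn)).toFinset
    have he : Function.Injective e := by
      intro s t hst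
      have h1 : (Subtype.val ⁻¹' s.1 : Set ↥a) = Subtype.val ⁻¹' t.1 := by
        have h0 := congrArg (fun f : Finset ↥a => (f : Set ↥a)) hst
        simpa only [e, Set.Finite.coe_toFinset] using h0
      have h2 : ∀ u : Set α, u ⊆ a →
          Subtype.val '' (Subtype.val ⁻¹' u : Set ↥a) = u := by
        intro u hu
        rw [Set.image_preimage_eq_inter_range, Subtype.range_val]
        exact Set.inter_eq_self_of_subset_left hu
      refine Subtype.ext ?_
      rw [← h2 s.1 s.2.1, ← h2 t.1 t.2.1, h1]
    have hle : #ι ≤ #(Finset ↥a) := mk_le_of_injective he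
    rcases Set.finite_or_infinite a with hfa | hifa
    · have : Finite ↥a := hfa.to_subtype
      have : Finite (Finset ↥a) :=
        Finite.of_injective (fun f : Finset ↥a => (f : Set ↥a)) fun _ _ h => Finset.coe_injective h
      exact hle.trans_lt ((lt_aleph0_iff_finite.mpr this).trans hunc)
    · have : Infinite ↥a := hifa.to_subtype
      rw [mk_finset_of_infinite] at hle
      exact hle.trans_lt ha.2
  set f : ι → Set α := fun s => F s.1 with hfdef
  have hdir : Directed (· ≤ ·) f := by
    intro s t
    refine ⟨⟨s.1 ∪ t.1, Set.union_subset s.2.1 t.2.1, s.2.2.union t.2.2⟩, ?_, ?_⟩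
    · exact hFmono _ s.1 ((Set.union_subset s.2.1 t.2.1).trans ha.1) (s.2.2.union t.2.2)
        Set.subset_union_left
    · exact hFmono _ t.1 ((Set.union_subset s.2.1 t.2.1).trans ha.1) (s.2.2.union t.2.2)
        Set.subset_union_right
  have hfC : ∀ s : ι, f s ∈ C := fun s =>
    hFC s.1 (s.2.1.trans ha.1) s.2.2
  have hcover : (⋃ s, f s) = a := by
    apply le_antisymm
    · exact Set.iUnion_subset fun s => hcl s.1 s.2.1 s.2.2
    · intro x hx
      refine Set.mem_iUnion.mpr ⟨⟨{x}, Set.singleton_subset_iff.mpr hx, Set.finite_singleton x⟩, ?_⟩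
      exact hFself {x} (Set.singleton_subset_iff.mpr (ha.1 hx)) (Set.finite_singleton x)
        (Set.mem_singleton x)
  rw [← hcover]
  exact myDirected hreg hunc hchain (#ι) hκι ι hne le_rfl f hdir hfC

end main

/-- Menas's theorem, other direction: every club `C ⊆ [X]^{<κ}` contains `cl_F` for
some `F : [X]^{<ω} → [X]^{<κ}`. -/
theorem stmt7 {α : Type u} (κ : Cardinal.{u}) (hreg : κ.IsRegular) (hunc : ℵ₀ < κ)
    (X : Set α) (hκX : κ ≤ #X)
    (C : Set (Set α)) (hC : IsClubIn κ X C) :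
    ∃ F : Set α → Set α, (∀ s : Set α, s ⊆ X → s.Finite → F s ∈ SmallSets κ X) ∧
      {a | a ∈ SmallSets κ X ∧ ∀ s ⊆ a, s.Finite → F s ⊆ a} ⊆ C :=
  stmt7' κ X C hreg hunc hC
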